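/- Consider a commutative square of topological spaces with p : X → Z, f : X → Y, q : Y → W, f̄ : Z → W, with f̄ ∘ p = q ∘ f. If f is a closed embedding, f̄ is injective, p is surjective, q is a closed map, and q⁻¹(f̄(Z)) ⊆ f(X), then f̄ is a closed embedding. -/

import Mathlib

open Filter Topology

/-- In a commutative square with `f` a closed embedding, `f̄` injective, `p` surjective and `q`
a closed map with `q⁻¹(f̄(Z)) ⊆ f(X)`, the map `f̄` is a closed embedding. -/
theorem stmt2 {X Y Z W : Type*} [TopologicalSpace X] [TopologicalSpace Y]
    [TopologicalSpace Z] [TopologicalSpace W]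
    (p : X → Z) (f : X → Y) (q : Y → W) (fbar : Z → W)
    (hp : Continuous p) (hfbar : Continuous fbar) (hqc : Continuous q)
    (hcomm : fbar ∘ p = q ∘ f)
    (hf : IsClosedEmbedding f) (hinj : Function.Injective fbar)
    (hpsurj : Function.Surjective p) (hq : IsClosedMap q)
    (hsat : q ⁻¹' (Set.range fbar) ⊆ Set.range f) :
    IsClosedEmbedding fbar := by
  apply IsClosedEmbedding.of_continuous_injective_isClosedMap hfbar hinj
  intro C hC
  have key : fbar '' C = q '' (f '' (p ⁻¹' C)) := by
    rw [← Set.image_comp, ← hcomm, Set.image_comp,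
      Set.image_preimage_eq_of_subset (by rw [Set.range_eq_univ.mpr hpsurj]; exact Set.subset_univ _)]
  rw [key]
  exact hq _ (hf.isClosedMap _ (hC.preimage hp))
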